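/- arXiv:2304.14606 — 2 statements merged into one kernel-verified Lean document; each statement's English description precedes it below -/
import Mathlib

section
/- Let β ∈ ℝ^D with β ≠ 0, let h_β be the linear classifier, and let a*(·) denote the closed-form optimal action. Fix a coordinate d° ∈ {1, …, D}. Let X be a random vector in ℝ^D (on some probability space) such that X_{d°} is square-integrable and (β·X)² is integrable. Set μ = E[X_{d°}] and σ² = E[(X_{d°} − μ)²], and let X̂ be the random vector with X̂_{d°} = μ and X̂_d = X_d for d ≠ d°. Then E[‖a*(X̂) − a*(X)‖₂²] ≤ (1/‖β‖₂²) · ( β_{d°}² · σ² + E[(β·X)² · 1{h_β(X) ≠ h_β(X̂)}] ). -/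
open MeasureTheory
open scoped RealInnerProductSpace

noncomputable section

/-- The linear classifier `h_β`. -/
def hbeta {D : ℕ} (β x : EuclideanSpace ℝ (Fin D)) : ℤ :=
  if 0 ≤ ⟪β, x⟫ then 1 else -1

/-- The closed-form optimal action `a*(x)`. -/
def aStar {D : ℕ} (β x : EuclideanSpace ℝ (Fin D)) : EuclideanSpace ℝ (Fin D) :=
  if hbeta β x = -1 then -((⟪β, x⟫ / ‖β‖ ^ 2) • β) else 0

lemma key_ineq (b u v : ℝ) (hb : 0 < b) :
    ((if 0 ≤ v then 0 else -(v / b)) - (if 0 ≤ u then 0 else -(u / b))) ^ 2 * b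
      ≤ (1 / b) * ((v - u) ^ 2 + (if (0 ≤ u ↔ 0 ≤ v) then 0 else u ^ 2)) := by
  have hb' : b ≠ 0 := hb.ne'
  split_ifs with h1 h2 h3 h4 h5 h6 h7
  · simp; positivity
  · tauto
  · tauto
  · have e : ((0:ℝ) - -(u / b)) ^ 2 * b = (1 / b) * u ^ 2 := by field_simp; ring
    rw [e]
    exact mul_le_mul_of_nonneg_left (by nlinarith [sq_nonneg (v - u)]) (by positivity)
  · tauto
  · have e : (-(v / b) - (0:ℝ)) ^ 2 * b = (1 / b) * v ^ 2 := by field_simp; ring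
    rw [e]
    refine mul_le_mul_of_nonneg_left ?_ (by positivity)
    have hu : 0 ≤ u := by assumption
    nlinarith [mul_nonneg hu (neg_nonneg.2 (le_of_not_ge h1))]
  · have e : (-(v / b) - -(u / b)) ^ 2 * b = (1 / b) * ((v - u) ^ 2 + 0) := by
      field_simp; ring
    rw [e]
  · tauto

lemma aStar_eq {D : ℕ} (β x : EuclideanSpace ℝ (Fin D)) :
    aStar β x = (if 0 ≤ ⟪β, x⟫ then 0 else -(⟪β, x⟫ / ‖β‖ ^ 2)) • β := by
  by_cases h : 0 ≤ ⟪β, x⟫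
  · rw [aStar, hbeta, if_pos h, if_pos h, if_neg (by decide), zero_smul]
  · rw [aStar, hbeta, if_neg h, if_neg h, if_pos rfl, neg_smul]

lemma hbeta_ne_iff {D : ℕ} (β x y : EuclideanSpace ℝ (Fin D)) :
    (hbeta β x ≠ hbeta β y) ↔ ¬(0 ≤ ⟪β, x⟫ ↔ 0 ≤ ⟪β, y⟫) := by
  rw [hbeta, hbeta]
  by_cases h1 : 0 ≤ ⟪β, x⟫ <;> by_cases h2 : 0 ≤ ⟪β, y⟫ <;>
    simp only [if_pos, if_neg, h1, h2] <;> simp [h1, h2]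

lemma normsq_smul_diff {D : ℕ} (β : EuclideanSpace ℝ (Fin D)) (c d : ℝ) :
    ‖c • β - d • β‖ ^ 2 = (c - d) ^ 2 * ‖β‖ ^ 2 := by
  rw [← sub_smul, norm_smul, mul_pow, Real.norm_eq_abs, sq_abs]

lemma inner_hat {D : ℕ} (β : EuclideanSpace ℝ (Fin D)) (d0 : Fin D) (m : ℝ)
    (x xh : EuclideanSpace ℝ (Fin D)) (h : ∀ d, xh d = if d = d0 then m else x d) :
    (⟪β, xh⟫ : ℝ) = ⟪β, x⟫ + β d0 * (m - x d0) := by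
  simp only [PiLp.inner_apply, RCLike.inner_apply, conj_trivial]
  simp only [mul_comm (WithLp.ofLp xh _), mul_comm (WithLp.ofLp x _)]
  have key : ∀ d, β d * xh d = β d * x d + (if d = d0 then β d0 * (m - x d0) else 0) := by
    intro d
    rw [h d]; by_cases hd : d = d0
    · subst hd; rw [if_pos rfl, if_pos rfl]; ring
    · rw [if_neg hd, if_neg hd]; ring
  simp only [key, Finset.sum_add_distrib, Finset.sum_ite_eq' Finset.univ d0,
    Finset.mem_univ, if_true]

/-- Mean-imputation bound: `E[‖a*(X̂) − a*(X)‖₂²] ≤ (1/‖β‖₂²)(β_{d°}²σ² + E[(β·X)²·1{h_β(X) ≠ h_β(X̂)}])`. -/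
theorem stmt4 {D : ℕ} (β : EuclideanSpace ℝ (Fin D)) (hβne : β ≠ 0) (d0 : Fin D)
    {Ω : Type*} [MeasurableSpace Ω] (μ : Measure Ω) [IsProbabilityMeasure μ]
    (X : Ω → EuclideanSpace ℝ (Fin D)) (hX : Measurable X)
    (hX2 : Integrable (fun ω => (X ω d0) ^ 2) μ)
    (hXβ : Integrable (fun ω => (⟪β, X ω⟫ : ℝ) ^ 2) μ)
    (m σ2 : ℝ) (Xhat : Ω → EuclideanSpace ℝ (Fin D))
    (hm : m = ∫ ω, X ω d0 ∂μ)
    (hσ2 : σ2 = ∫ ω, (X ω d0 - m) ^ 2 ∂μ)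
    (hXhat : ∀ ω d, Xhat ω d = if d = d0 then m else X ω d) :
    ∫ ω, ‖aStar β (Xhat ω) - aStar β (X ω)‖ ^ 2 ∂μ ≤
      (1 / ‖β‖ ^ 2) *
        (β d0 ^ 2 * σ2 +
          ∫ ω, (if hbeta β (X ω) ≠ hbeta β (Xhat ω) then (⟪β, X ω⟫ : ℝ) ^ 2 else 0) ∂μ) := by
  have hb : (0:ℝ) < ‖β‖ ^ 2 := by
    have : 0 < ‖β‖ := norm_pos_iff.2 hβne
    positivity
  have hv : ∀ ω, (⟪β, Xhat ω⟫ : ℝ) = ⟪β, X ω⟫ + β d0 * (m - X ω d0) :=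
    fun ω => inner_hat β d0 m _ _ (hXhat ω)
  -- measurability
  have hXd0 : Measurable (fun ω => X ω d0) := (measurable_pi_apply d0).comp ((WithLp.measurable_ofLp _ _).comp hX)
  have hu : Measurable (fun ω => (⟪β, X ω⟫ : ℝ)) := Measurable.inner measurable_const hX
  have hvmeas : Measurable (fun ω => (⟪β, Xhat ω⟫ : ℝ)) := by
    have : (fun ω => (⟪β, Xhat ω⟫ : ℝ))
        = fun ω => ⟪β, X ω⟫ + β d0 * (m - X ω d0) := funext hv
    rw [this]
    exact hu.add (measurable_const.mul (measurable_const.sub hXd0))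
  have hs : MeasurableSet {ω | hbeta β (X ω) ≠ hbeta β (Xhat ω)} := by
    have hset : {ω | hbeta β (X ω) ≠ hbeta β (Xhat ω)}
        = ({ω | 0 ≤ (⟪β, X ω⟫ : ℝ)} \ {ω | 0 ≤ (⟪β, Xhat ω⟫ : ℝ)})
          ∪ ({ω | 0 ≤ (⟪β, Xhat ω⟫ : ℝ)} \ {ω | 0 ≤ (⟪β, X ω⟫ : ℝ)}) := by
      ext ω
      simp only [Set.mem_setOf_eq, Set.mem_union, Set.mem_diff, hbeta_ne_iff]
      tauto
    rw [hset]
    exact ((measurableSet_le measurable_const hu).diff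
        (measurableSet_le measurable_const hvmeas)).union
      ((measurableSet_le measurable_const hvmeas).diff
        (measurableSet_le measurable_const hu))
  -- integrability of the dominating function
  have hind : Integrable
      (fun ω => (if hbeta β (X ω) ≠ hbeta β (Xhat ω) then (⟪β, X ω⟫ : ℝ) ^ 2 else 0)) μ := by
    refine Integrable.mono' hXβ ?_ ?_
    · exact (Measurable.ite hs (hu.pow_const 2) measurable_const).aestronglyMeasurable
    · filter_upwards with ω
      rw [Real.norm_eq_abs]
      split_ifs
      · rw [abs_of_nonneg (sq_nonneg _)]
      · simp [sq_nonneg]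
  have hsq : Integrable (fun ω => (X ω d0 - m) ^ 2) μ := by
    refine Integrable.mono' ((hX2.const_mul 2).add (integrable_const (2 * m ^ 2))) ?_ ?_
    · exact ((hXd0.sub_const m).pow_const 2).aestronglyMeasurable
    · filter_upwards with ω
      rw [Real.norm_eq_abs, abs_of_nonneg (sq_nonneg _), Pi.add_apply]
      nlinarith [sq_nonneg (X ω d0 + m)]
  have hg_int : Integrable (fun ω =>
      (1 / ‖β‖ ^ 2) * (β d0 ^ 2 * (X ω d0 - m) ^ 2 +
        (if hbeta β (X ω) ≠ hbeta β (Xhat ω) then (⟪β, X ω⟫ : ℝ) ^ 2 else 0))) μ :=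
    (((hsq.const_mul (β d0 ^ 2)).add hind).const_mul _)
  -- pointwise bound
  have hpt : ∀ ω, ‖aStar β (Xhat ω) - aStar β (X ω)‖ ^ 2 ≤
      (1 / ‖β‖ ^ 2) * (β d0 ^ 2 * (X ω d0 - m) ^ 2 +
        (if hbeta β (X ω) ≠ hbeta β (Xhat ω) then (⟪β, X ω⟫ : ℝ) ^ 2 else 0)) := by
    intro ω
    rw [aStar_eq, aStar_eq, normsq_smul_diff]
    have hkey := key_ineq (‖β‖ ^ 2) ⟪β, X ω⟫ ⟪β, Xhat ω⟫ hb
    have e1 : ((⟪β, Xhat ω⟫ : ℝ) - ⟪β, X ω⟫) ^ 2 = β d0 ^ 2 * (X ω d0 - m) ^ 2 := by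
      rw [hv ω]; ring
    have e2 : (if hbeta β (X ω) ≠ hbeta β (Xhat ω) then (⟪β, X ω⟫ : ℝ) ^ 2 else 0)
        = (if (0 ≤ (⟪β, X ω⟫ : ℝ) ↔ 0 ≤ (⟪β, Xhat ω⟫ : ℝ)) then 0
            else (⟪β, X ω⟫ : ℝ) ^ 2) := by
      by_cases h : (0 ≤ (⟪β, X ω⟫ : ℝ) ↔ 0 ≤ (⟪β, Xhat ω⟫ : ℝ))
      · rw [if_pos h, if_neg (by rw [hbeta_ne_iff]; tauto)]
      · rw [if_neg h, if_pos ((hbeta_ne_iff β _ _).2 h)]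
    rw [e2, ← e1]
    exact hkey
  -- assemble
  calc ∫ ω, ‖aStar β (Xhat ω) - aStar β (X ω)‖ ^ 2 ∂μ
      ≤ ∫ ω, (1 / ‖β‖ ^ 2) * (β d0 ^ 2 * (X ω d0 - m) ^ 2 +
          (if hbeta β (X ω) ≠ hbeta β (Xhat ω) then (⟪β, X ω⟫ : ℝ) ^ 2 else 0)) ∂μ := by
        refine integral_mono_of_nonneg ?_ hg_int ?_
        · filter_upwards with ω; positivity
        · filter_upwards with ω; exact hpt ω
    _ = (1 / ‖β‖ ^ 2) *
        (β d0 ^ 2 * σ2 +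
          ∫ ω, (if hbeta β (X ω) ≠ hbeta β (Xhat ω) then (⟪β, X ω⟫ : ℝ) ^ 2 else 0) ∂μ) := by
        rw [integral_const_mul, integral_add (hsq.const_mul _) hind, integral_const_mul, ← hσ2]

end
end

section
/- Let β ∈ ℝ^D with β ≠ 0, let h_β be the linear classifier, and let a*(·) denote the closed-form optimal action. Fix d° ∈ {1, …, D}, x ∈ ℝ^D, and v ∈ ℝ, and let x̂ ∈ ℝ^D satisfy x̂_{d°} = v and x̂_d = x_d for d ≠ d°. Then ‖a*(x̂) − a*(x)‖₂² equals: (β_{d°}²/‖β‖₂²)·(x_{d°} − v)² if h_β(x) = −1 and h_β(x̂) = −1; (1/‖β‖₂²)·(β·x)² if h_β(x) = −1 and h_β(x̂) = +1; (1/‖β‖₂²)·(β·x̂)² if h_β(x) = +1 and h_β(x̂) = −1; and 0 if h_β(x) = +1 and h_β(x̂) = +1. -/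
open scoped RealInnerProductSpace

noncomputable section

lemma normsq_smul {D : ℕ} (c : ℝ) (β : EuclideanSpace ℝ (Fin D)) :
    ‖c • β‖ ^ 2 = c ^ 2 * ‖β‖ ^ 2 := by
  rw [norm_smul, mul_pow, Real.norm_eq_abs, sq_abs]

/-- The four-case closed form of `‖a*(x̂) − a*(x)‖₂²` under single-feature imputation. -/
theorem stmt5 {D : ℕ} (β : EuclideanSpace ℝ (Fin D)) (hβne : β ≠ 0) (d0 : Fin D)
    (x xhat : EuclideanSpace ℝ (Fin D)) (v : ℝ)
    (hxhat : ∀ d, xhat d = if d = d0 then v else x d) :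
    (hbeta β x = -1 → hbeta β xhat = -1 →
      ‖aStar β xhat - aStar β x‖ ^ 2 = β d0 ^ 2 / ‖β‖ ^ 2 * (x d0 - v) ^ 2) ∧
    (hbeta β x = -1 → hbeta β xhat = 1 →
      ‖aStar β xhat - aStar β x‖ ^ 2 = 1 / ‖β‖ ^ 2 * (⟪β, x⟫ : ℝ) ^ 2) ∧
    (hbeta β x = 1 → hbeta β xhat = -1 →
      ‖aStar β xhat - aStar β x‖ ^ 2 = 1 / ‖β‖ ^ 2 * (⟪β, xhat⟫ : ℝ) ^ 2) ∧
    (hbeta β x = 1 → hbeta β xhat = 1 →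
      ‖aStar β xhat - aStar β x‖ ^ 2 = 0) := by
  have hb2 : (‖β‖ : ℝ) ^ 2 ≠ 0 := pow_ne_zero _ (norm_ne_zero_iff.mpr hβne)
  have hkey : (⟪β, xhat⟫ : ℝ) = ⟪β, x⟫ + β d0 * (v - x d0) := by
    simp only [PiLp.inner_apply, RCLike.inner_apply, conj_trivial]
    have h : ∀ i ∈ Finset.univ, xhat i * β i
        = x i * β i + (if i = d0 then β i * (v - x d0) else 0) := by
      intro i _
      rw [hxhat i]
      split_ifs with h
      · subst h; ring
      · ring
    rw [Finset.sum_congr rfl h, Finset.sum_add_distrib, Finset.sum_ite_eq' Finset.univ d0]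
    simp
  refine ⟨?_, ?_, ?_, ?_⟩ <;> intro h1 h2 <;> simp only [aStar, h1, h2, if_pos rfl,
    reduceCtorEq, if_neg (by decide : (1 : ℤ) ≠ -1), if_true, if_false]
  · have e : -((⟪β, xhat⟫ / ‖β‖ ^ 2) • β) - -((⟪β, x⟫ / ‖β‖ ^ 2) • β)
        = ((⟪β, x⟫ / ‖β‖ ^ 2 - ⟪β, xhat⟫ / ‖β‖ ^ 2)) • β := by module
    rw [e, normsq_smul, hkey]
    field_simp
    ring
  · rw [zero_sub, norm_neg, norm_neg, normsq_smul]
    field_simp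
  · rw [sub_zero, norm_neg, normsq_smul]
    field_simp
  · simp

end
end
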